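/- For real numbers y_{1,b}, y_{2,b} ≥ 0 with y_{1,b} + y_{2,b} ≤ 1 indexed by a finite set B, the function G(y) := 1 - ∏_{b∈B}(1 - y_{1,b} - y_{2,b}) - ∑_{b∈B} y_{2,b} ∏_{b'≠b}(1 - y_{1,b'} - y_{2,b'}) is monotone nondecreasing in each coordinate y_{2,b}. -/
import Mathlib


theorem stmt13 {ι : Type*} [DecidableEq ι] (B : Finset ι) (y1 y2 y2' : ι → ℝ)
    (b : ι) (hb : b ∈ B)
    (h1 : ∀ i ∈ B, 0 ≤ y1 i) (h2 : ∀ i ∈ B, 0 ≤ y2 i)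
    (hs : ∀ i ∈ B, y1 i + y2 i ≤ 1)
    (h2' : ∀ i ∈ B, 0 ≤ y2' i) (hs' : ∀ i ∈ B, y1 i + y2' i ≤ 1)
    (heq : ∀ i ∈ B, i ≠ b → y2' i = y2 i) (hmono : y2 b ≤ y2' b) :
    1 - (∏ i ∈ B, (1 - y1 i - y2 i)) -
      ∑ i ∈ B, y2 i * ∏ j ∈ B.erase i, (1 - y1 j - y2 j) ≤
    1 - (∏ i ∈ B, (1 - y1 i - y2' i)) -
      ∑ i ∈ B, y2' i * ∏ j ∈ B.erase i, (1 - y1 j - y2' j) := by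
  classical
  set f : ι → ℝ := fun j => 1 - y1 j - y2 j with hf
  set f' : ι → ℝ := fun j => 1 - y1 j - y2' j with hf'
  have hfeq : ∀ j ∈ B, j ≠ b → f' j = f j := by
    intro j hj hjb
    simp only [hf, hf', heq j hj hjb]
  have hfnn : ∀ j ∈ B, 0 ≤ f j := fun j hj => by
    have h := hs j hj; simp only [hf]; linarith
  have hmemb : ∀ i ∈ B.erase b, b ∈ B.erase i := fun i hi =>
    Finset.mem_erase.mpr ⟨(Finset.ne_of_mem_erase hi).symm, hb⟩
  have hprod : ∏ i ∈ B, f i = f b * ∏ i ∈ B.erase b, f i :=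
    (Finset.mul_prod_erase B f hb).symm
  have hprod' : ∏ i ∈ B, f' i = f' b * ∏ i ∈ B.erase b, f i := by
    rw [← Finset.mul_prod_erase B f' hb]
    congr 1
    exact Finset.prod_congr rfl fun j hj =>
      hfeq j (Finset.mem_of_mem_erase hj) (Finset.ne_of_mem_erase hj)
  have hsum : ∑ i ∈ B, y2 i * ∏ j ∈ B.erase i, f j
      = y2 b * ∏ j ∈ B.erase b, f j
        + f b * ∑ i ∈ B.erase b, y2 i * ∏ j ∈ (B.erase b).erase i, f j := by
    rw [← Finset.add_sum_erase B _ hb, Finset.mul_sum]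
    congr 1
    refine Finset.sum_congr rfl fun i hi => ?_
    rw [← Finset.mul_prod_erase (B.erase i) f (hmemb i hi), Finset.erase_right_comm]
    ring
  have hsum' : ∑ i ∈ B, y2' i * ∏ j ∈ B.erase i, f' j
      = y2' b * ∏ j ∈ B.erase b, f j
        + f' b * ∑ i ∈ B.erase b, y2 i * ∏ j ∈ (B.erase b).erase i, f j := by
    rw [← Finset.add_sum_erase B _ hb, Finset.mul_sum]
    congr 1
    · congr 1
      exact Finset.prod_congr rfl fun j hj =>
        hfeq j (Finset.mem_of_mem_erase hj) (Finset.ne_of_mem_erase hj)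
    refine Finset.sum_congr rfl fun i hi => ?_
    rw [heq i (Finset.mem_of_mem_erase hi) (Finset.ne_of_mem_erase hi),
      ← Finset.mul_prod_erase (B.erase i) f' (hmemb i hi), Finset.erase_right_comm]
    have : ∏ j ∈ (B.erase b).erase i, f' j = ∏ j ∈ (B.erase b).erase i, f j :=
      Finset.prod_congr rfl fun j hj =>
        hfeq j (Finset.mem_of_mem_erase (Finset.mem_of_mem_erase hj))
          (by
            have := Finset.mem_of_mem_erase hj
            exact Finset.ne_of_mem_erase this)
    rw [this]; ring
  have hT : 0 ≤ ∑ i ∈ B.erase b, y2 i * ∏ j ∈ (B.erase b).erase i, f j := by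
    refine Finset.sum_nonneg fun i hi => mul_nonneg (h2 i (Finset.mem_of_mem_erase hi)) ?_
    exact Finset.prod_nonneg fun j hj =>
      hfnn j (Finset.mem_of_mem_erase (Finset.mem_of_mem_erase hj))
  have hP : 0 ≤ ∏ i ∈ B.erase b, f i :=
    Finset.prod_nonneg fun j hj => hfnn j (Finset.mem_of_mem_erase hj)
  rw [hprod, hprod', hsum, hsum']
  have hfb : f b = 1 - y1 b - y2 b := rfl
  have hfb' : f' b = 1 - y1 b - y2' b := rfl
  nlinarith [mul_nonneg (sub_nonneg.mpr hmono)
    hT]
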